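/- Let T ∈ C^{n×n} be a block matrix with respect to a partition (n_1,...,n_k) of n, such that each block T_{i,j} is upper triangular Toeplitz. Then the characteristic polynomial of T depends only on the leading (main-diagonal) entries t^{(1)}_{i,j} of those blocks T_{i,j} with n_i = n_j. Equivalently, if two such matrices T and T' satisfy t^{(1)}_{i,j} = (t')^{(1)}_{i,j} for all i,j with n_i = n_j, then T and T' have the same characteristic polynomial. -/

import Mathlib

open Matrix

/-- A rectangular `p × q` matrix is upper triangular Toeplitz (top-right aligned when
`p ≤ q`, top-left aligned when `q ≤ p`). -/
def IsUpperTriToeplitz {p q : ℕ} (M : Matrix (Fin p) (Fin q) ℂ) : Prop :=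
  ∃ t : ℤ → ℂ, ∀ (a : Fin p) (b : Fin q),
    M a b = if max 0 ((q : ℤ) - (p : ℤ)) ≤ (b : ℤ) - (a : ℤ) then t ((b : ℤ) - (a : ℤ)) else 0

/-- The characteristic polynomial of a block matrix with upper triangular Toeplitz blocks
depends only on the leading (main-diagonal) entries of the blocks `T_{i,j}` with
`n i = n j`: two such matrices agreeing on those entries have equal characteristic
polynomials. -/
theorem charpoly_eq_of_blockToeplitz_leading_entries_eq
    {k : ℕ} (n : Fin k → ℕ) (hn : ∀ i, 0 < n i)
    (T T' : Matrix ((i : Fin k) × Fin (n i)) ((i : Fin k) × Fin (n i)) ℂ)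
    (hT : ∀ i j : Fin k, IsUpperTriToeplitz
      (Matrix.of fun (a : Fin (n i)) (b : Fin (n j)) => T ⟨i, a⟩ ⟨j, b⟩))
    (hT' : ∀ i j : Fin k, IsUpperTriToeplitz
      (Matrix.of fun (a : Fin (n i)) (b : Fin (n j)) => T' ⟨i, a⟩ ⟨j, b⟩))
    (hlead : ∀ i j : Fin k, n i = n j →
      T ⟨i, ⟨0, hn i⟩⟩ ⟨j, ⟨0, hn j⟩⟩ = T' ⟨i, ⟨0, hn i⟩⟩ ⟨j, ⟨0, hn j⟩⟩) :
    T.charpoly = T'.charpoly := by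
  classical
  set w : ((i : Fin k) × Fin (n i)) → Lex (ℤ × ℤ) :=
    fun x => toLex ((x.2 : ℤ) - (n x.1 : ℤ), (n x.1 : ℤ)) with hw
  -- zero condition below the "diagonal"
  have key0 : ∀ (S : Matrix ((i : Fin k) × Fin (n i)) ((i : Fin k) × Fin (n i)) ℂ),
      (∀ i j : Fin k, IsUpperTriToeplitz
        (Matrix.of fun (a : Fin (n i)) (b : Fin (n j)) => S ⟨i, a⟩ ⟨j, b⟩)) →
      ∀ x y : ((i : Fin k) × Fin (n i)), w y < w x → S x y = 0 := by
    intro S hS x y hlt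
    obtain ⟨i, a⟩ := x
    obtain ⟨j, b⟩ := y
    obtain ⟨t, ht⟩ := hS i j
    have h1 := ht a b
    simp only [Matrix.of_apply] at h1
    rw [h1, if_neg]
    intro hle
    rw [max_le_iff] at hle
    obtain ⟨h2, h3⟩ := hle
    apply absurd hlt
    rw [not_lt, hw]
    rw [Prod.Lex.le_iff]
    simp only [ofLex_toLex]
    omega
  -- equal entries within a diagonal square block
  have keyd : ∀ (S : Matrix ((i : Fin k) × Fin (n i)) ((i : Fin k) × Fin (n i)) ℂ),
      (∀ i j : Fin k, IsUpperTriToeplitz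
        (Matrix.of fun (a : Fin (n i)) (b : Fin (n j)) => S ⟨i, a⟩ ⟨j, b⟩)) →
      ∀ (i j : Fin k) (a : Fin (n i)) (b : Fin (n j)), n i = n j → (a : ℕ) = (b : ℕ) →
      S ⟨i, a⟩ ⟨j, b⟩ = S ⟨i, ⟨0, hn i⟩⟩ ⟨j, ⟨0, hn j⟩⟩ := by
    intro S hS i j a b hnij hab
    obtain ⟨t, ht⟩ := hS i j
    have h1 := ht a b
    have h2 := ht ⟨0, hn i⟩ ⟨0, hn j⟩
    simp only [Matrix.of_apply] at h1 h2
    have e1 : ((b : ℤ) - (a : ℤ)) = 0 := by omega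
    have e2 : (((⟨0, hn j⟩ : Fin (n j)) : ℤ) - ((⟨0, hn i⟩ : Fin (n i)) : ℤ)) = 0 := by simp
    rw [h1, h2, e1, e2, if_pos]
    omega
  -- block triangularity of the charmatrices
  have hbt : ∀ (S : Matrix ((i : Fin k) × Fin (n i)) ((i : Fin k) × Fin (n i)) ℂ),
      (∀ i j : Fin k, IsUpperTriToeplitz
        (Matrix.of fun (a : Fin (n i)) (b : Fin (n j)) => S ⟨i, a⟩ ⟨j, b⟩)) →
      (charmatrix S).BlockTriangular w := by
    intro S hS x y hlt
    have hxy : x ≠ y := by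
      rintro rfl
      exact lt_irrefl _ hlt
    rw [charmatrix_apply_ne _ _ _ hxy, key0 S hS x y hlt, map_zero, neg_zero]
  have hbt1 := hbt T hT
  have hbt2 := hbt T' hT'
  unfold Matrix.charpoly
  rw [hbt1.det, hbt2.det]
  refine Finset.prod_congr rfl fun v _ => ?_
  congr 1
  refine Matrix.ext fun x y => ?_
  obtain ⟨⟨i, a⟩, hx⟩ := x
  obtain ⟨⟨j, b⟩, hy⟩ := y
  have hv : w ⟨i, a⟩ = w ⟨j, b⟩ := hx.trans hy.symm
  rw [hw] at hv
  have hv' : ((a : ℤ) - (n i : ℤ), (n i : ℤ)) = ((b : ℤ) - (n j : ℤ), (n j : ℤ)) :=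
    toLex_inj.mp hv
  rw [Prod.mk.injEq] at hv'
  have hnij : n i = n j := by omega
  have hab : (a : ℕ) = (b : ℕ) := by omega
  simp only [Matrix.toSquareBlock_def, Matrix.of_apply]
  by_cases hxy : (⟨i, a⟩ : (i : Fin k) × Fin (n i)) = ⟨j, b⟩
  · rw [hxy, charmatrix_apply_eq, charmatrix_apply_eq]
    obtain ⟨j, b⟩ := (⟨j, b⟩ : (i : Fin k) × Fin (n i))
    rw [keyd T hT j j b b rfl rfl, keyd T' hT' j j b b rfl rfl, hlead j j rfl]
  · rw [charmatrix_apply_ne _ _ _ hxy, charmatrix_apply_ne _ _ _ hxy,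
      keyd T hT i j a b hnij hab, keyd T' hT' i j a b hnij hab, hlead i j hnij]
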